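/- If G is a finite simple graph with maximum vertex degree at most 2, then the Laplacian spectrum λ(G) is majorized by the conjugate degree sequence d^T(G). -/

import Mathlib

open Finset

lemma card_filter_val_lt (n d : ℕ) (hd : d ≤ n) :
    (Finset.univ.filter fun i : Fin n => (i : ℕ) < d).card = d := by
  rw [← Finset.card_range d]
  refine Finset.card_bij (fun i _ => (i : ℕ)) ?_ ?_ ?_
  · intro a ha; simp only [mem_filter] at ha; simpa using ha.2
  · intro a _ b _ hab; exact Fin.val_injective hab
  · intro j hj
    rw [Finset.mem_range] at hj
    exact ⟨⟨j, lt_of_lt_of_le hj hd⟩, by simp [hj], rfl⟩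

lemma trace_eq_sum_eig {n : ℕ} (G : SimpleGraph (Fin n)) [DecidableRel G.Adj]
    (h : (G.lapMatrix ℝ).IsHermitian) :
    Matrix.trace (G.lapMatrix ℝ) = ∑ i, h.eigenvalues i := by
  nth_rewrite 1 [h.spectral_theorem]
  rw [Unitary.conjStarAlgAut_apply, Matrix.trace_mul_comm, ← Matrix.mul_assoc,
    Matrix.mem_unitaryGroup_iff'.mp (Matrix.IsHermitian.eigenvectorUnitary h).2,
    Matrix.one_mul, Matrix.trace_diagonal]
  simp

lemma quad_bound {n : ℕ} (G : SimpleGraph (Fin n)) [DecidableRel G.Adj] (x : Fin n → ℝ) :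
    Matrix.toLinearMap₂' ℝ (G.lapMatrix ℝ) x x ≤
      ((Finset.univ.filter fun v : Fin n => 1 ≤ G.degree v).card : ℝ) * ∑ k, x k ^ 2 := by
  set S := Finset.univ.filter fun v : Fin n => 1 ≤ G.degree v with hS
  rw [SimpleGraph.lapMatrix_toLinearMap₂']
  have hmem : ∀ i j : Fin n, G.Adj i j → i ∈ S ∧ j ∈ S := by
    intro i j hij
    constructor <;> rw [hS, Finset.mem_filter] <;> refine ⟨Finset.mem_univ _, ?_⟩
    · exact (G.degree_pos_iff_exists_adj i).mpr ⟨_, hij⟩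
    · exact (G.degree_pos_iff_exists_adj j).mpr ⟨_, hij.symm⟩
  -- step A: restrict double sum to S × S
  have stepA : (∑ i : Fin n, ∑ j : Fin n, if G.Adj i j then (x i - x j)^2 else 0)
      ≤ ∑ i ∈ S, ∑ j ∈ S, (x i - x j)^2 := by
    have h1 : (∑ i : Fin n, ∑ j : Fin n, if G.Adj i j then (x i - x j)^2 else 0)
        = ∑ i ∈ S, ∑ j ∈ S, if G.Adj i j then (x i - x j)^2 else 0 := by
      rw [← Finset.sum_subset (Finset.subset_univ S)]
      · refine Finset.sum_congr rfl fun i hi => ?_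
        rw [← Finset.sum_subset (Finset.subset_univ S)]
        intro j _ hj
        simp only [ite_eq_right_iff]
        intro hadj; exact absurd ((hmem i j hadj).2) hj
      · intro i _ hi
        apply Finset.sum_eq_zero
        intro j _
        simp only [ite_eq_right_iff]
        intro hadj; exact absurd ((hmem i j hadj).1) hi
    rw [h1]
    refine Finset.sum_le_sum fun i _ => Finset.sum_le_sum fun j _ => ?_
    by_cases hc : G.Adj i j
    · simp [hc]
    · simp only [hc, if_false]; positivity
  -- step B: expand the square sum
  have stepB : ∑ i ∈ S, ∑ j ∈ S, (x i - x j)^2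
      = 2 * S.card * (∑ k ∈ S, x k ^ 2) - 2 * (∑ k ∈ S, x k)^2 := by
    have inner : ∀ i : Fin n, ∑ j ∈ S, (x i - x j)^2
        = S.card * x i ^ 2 - 2 * x i * (∑ j ∈ S, x j) + ∑ j ∈ S, x j ^ 2 := by
      intro i
      simp_rw [sub_sq]
      rw [Finset.sum_add_distrib, Finset.sum_sub_distrib, Finset.sum_const,
        nsmul_eq_mul, ← Finset.mul_sum]
      try ring
    simp_rw [inner]
    rw [Finset.sum_add_distrib, Finset.sum_sub_distrib, Finset.sum_const, nsmul_eq_mul]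
    have hT : ∑ i ∈ S, 2 * x i * (∑ j ∈ S, x j) = 2 * (∑ j ∈ S, x j)^2 := by
      rw [← Finset.sum_mul, ← Finset.mul_sum]
      ring
    rw [hT, ← Finset.mul_sum]
    ring
  have hsub : (∑ k ∈ S, x k ^ 2) ≤ ∑ k : Fin n, x k ^ 2 := by
    apply Finset.sum_le_sum_of_subset_of_nonneg (Finset.subset_univ S)
    intro k _ _; positivity
  have hle : (∑ i : Fin n, ∑ j : Fin n, if G.Adj i j then (x i - x j)^2 else 0)
      ≤ 2 * S.card * ∑ k : Fin n, x k ^ 2 := by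
    calc _ ≤ ∑ i ∈ S, ∑ j ∈ S, (x i - x j)^2 := stepA
    _ = 2 * S.card * (∑ k ∈ S, x k ^ 2) - 2 * (∑ k ∈ S, x k)^2 := stepB
    _ ≤ 2 * S.card * (∑ k ∈ S, x k ^ 2) := by nlinarith [sq_nonneg (∑ k ∈ S, x k)]
    _ ≤ 2 * S.card * ∑ k : Fin n, x k ^ 2 := by
        apply mul_le_mul_of_nonneg_left hsub; positivity
  linarith

lemma eig_le_card {n : ℕ} (G : SimpleGraph (Fin n)) [DecidableRel G.Adj]
    (h : (G.lapMatrix ℝ).IsHermitian) (i : Fin n) :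
    h.eigenvalues i ≤ ((Finset.univ.filter fun v : Fin n => 1 ≤ G.degree v).card : ℝ) := by
  set v : Fin n → ℝ := ⇑(h.eigenvectorBasis i) with hv
  have hnorm : ∑ k, v k ^ 2 = 1 := by
    have h1 : ‖h.eigenvectorBasis i‖ = 1 := h.eigenvectorBasis.orthonormal.1 i
    have h2 : ‖h.eigenvectorBasis i‖ ^ 2 = ∑ k, v k ^ 2 := by
      rw [EuclideanSpace.norm_eq, Real.sq_sqrt (by positivity)]
      simp [hv, sq_abs]
    rw [← h2, h1, one_pow]
  have heq : h.eigenvalues i = Matrix.toLinearMap₂' ℝ (G.lapMatrix ℝ) v v := by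
    rw [h.eigenvalues_eq, Matrix.toLinearMap₂'_apply']
    simp [hv]
  rw [heq]
  calc Matrix.toLinearMap₂' ℝ (G.lapMatrix ℝ) v v
      ≤ ((Finset.univ.filter fun w : Fin n => 1 ≤ G.degree w).card : ℝ) * ∑ k, v k ^ 2 :=
        quad_bound G v
    _ = _ := by rw [hnorm, mul_one]

def Majorizes {I K : Type*} [Fintype I] [Fintype K] (y : I → ℝ) (x : K → ℝ) : Prop :=
  (∀ A : Finset K, ∃ B : Finset I, B.card = A.card ∧ ∑ i ∈ A, x i ≤ ∑ i ∈ B, y i) ∧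
  (∑ i, x i) = (∑ i, y i)

theorem groneMerris_maxDegree_two {n : ℕ} (G : SimpleGraph (Fin n)) [DecidableRel G.Adj]
    (hdeg : ∀ v, G.degree v ≤ 2) (h : (G.lapMatrix ℝ).IsHermitian) :
    Majorizes
      (fun i : Fin n => ((Finset.univ.filter fun v => (i : ℕ) + 1 ≤ G.degree v).card : ℝ))
      h.eigenvalues := by
  set y : Fin n → ℝ :=
    fun i : Fin n => ((Finset.univ.filter fun v => (i : ℕ) + 1 ≤ G.degree v).card : ℝ) with hy
  have hnn : ∀ i, 0 ≤ h.eigenvalues i :=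
    fun i => (SimpleGraph.posSemidef_lapMatrix ℝ G).eigenvalues_nonneg i
  -- trace equals sum of degrees
  have htr : Matrix.trace (G.lapMatrix ℝ) = ∑ v, (G.degree v : ℝ) := by
    simp [Matrix.trace, Matrix.diag, SimpleGraph.lapMatrix, SimpleGraph.degMatrix]
  -- each vertex's degree counted in the conjugate sequence
  have key : ∀ v : Fin n,
      (Finset.univ.filter fun i : Fin n => (i : ℕ) + 1 ≤ G.degree v).card = G.degree v := by
    intro v
    have hd : G.degree v ≤ n := le_of_lt (by simpa using G.degree_lt_card_verts v)
    have heq : (Finset.univ.filter fun i : Fin n => (i : ℕ) + 1 ≤ G.degree v)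
        = Finset.univ.filter fun i : Fin n => (i : ℕ) < G.degree v :=
      Finset.filter_congr (fun i _ => by omega)
    rw [heq, card_filter_val_lt n (G.degree v) hd]
  have hswap : ∑ i : Fin n,
      (Finset.univ.filter fun v => (i : ℕ) + 1 ≤ G.degree v).card = ∑ v, G.degree v := by
    simp_rw [Finset.card_filter]
    rw [Finset.sum_comm]
    refine Finset.sum_congr rfl fun v _ => ?_
    rw [← Finset.card_filter]
    exact key v
  have total : ∑ i, h.eigenvalues i = ∑ i, y i := by
    rw [← trace_eq_sum_eig G h, htr, hy]
    push_cast
    exact_mod_cast (congrArg (fun m : ℕ => (m : ℝ)) hswap).symm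
  constructor
  · intro A
    rcases Finset.eq_empty_or_nonempty A with rfl | ⟨a, ha⟩
    · exact ⟨∅, by simp⟩
    have hn : 0 < n := a.pos
    rcases le_or_gt A.card 1 with h1 | h2
    · -- A is a singleton
      have hA1 : A.card = 1 := le_antisymm h1 (Finset.card_pos.mpr ⟨a, ha⟩)
      obtain ⟨b, rfl⟩ := Finset.card_eq_one.mp hA1
      refine ⟨{⟨0, hn⟩}, by simp, ?_⟩
      rw [Finset.sum_singleton, Finset.sum_singleton]
      have := eig_le_card G h b
      simpa [hy, zero_add, Nat.one_le_iff_ne_zero, Nat.pos_iff_ne_zero] using this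
    · -- A has at least two elements
      have hA2 : 2 ≤ A.card := h2
      have hn2 : 2 ≤ n := le_trans hA2 (by simpa using A.card_le_univ)
      set P : Finset (Fin n) := {⟨0, hn⟩, ⟨1, lt_of_lt_of_le (by norm_num) hn2⟩} with hP
      have hPcard : P.card = 2 := by
        rw [hP, Finset.card_pair]
        simp [Fin.ext_iff]
      obtain ⟨B, hPB, hBuniv, hBcard⟩ := Finset.exists_subsuperset_card_eq P.subset_univ (n := A.card - 2 + P.card) (by omega)
        (by rw [hPcard, Nat.sub_add_cancel hA2]; simpa using A.card_le_univ)
      have hBcard' : B.card = A.card := by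
        rw [hBcard, hPcard, Nat.sub_add_cancel hA2]
      refine ⟨B, hBcard', ?_⟩
      have step1 : ∑ i ∈ A, h.eigenvalues i ≤ ∑ i : Fin n, h.eigenvalues i :=
        Finset.sum_le_sum_of_subset_of_nonneg A.subset_univ (fun i _ _ => hnn i)
      have step2 : ∑ i ∈ B, y i = ∑ i : Fin n, y i := by
        apply Finset.sum_subset (Finset.subset_univ B)
        intro i _ hiB
        have hiP : i ∉ P := fun hp => hiB (hPB hp)
        have hi2 : 2 ≤ (i : ℕ) := by
          rw [hP] at hiP
          simp only [Finset.mem_insert, Finset.mem_singleton, Fin.ext_iff] at hiP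
          omega
        have : (Finset.univ.filter fun v => (i : ℕ) + 1 ≤ G.degree v) = ∅ := by
          rw [Finset.filter_eq_empty_iff]
          intro v _
          have := hdeg v
          omega
        simp only [hy, this, Finset.card_empty, Nat.cast_zero]
      rw [step2]
      exact le_trans step1 total.le
  · exact total
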